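/- Let α > 0 and β > 0. Then e₀ < e_T, where e_T is the infimum of the translation-invariant problem; i.e., the delta-well Pekar energy is strictly below the translation-invariant Pekar energy. -/

import Mathlib

open MeasureTheory Real Filter

noncomputable section

/-- An element of the Sobolev space `H¹(ℝ)` of complex-valued functions, represented by its
continuous representative together with its (weak) derivative: the function and the derivative
are square integrable, and the function is the indefinite integral of its derivative. -/
structure H1 where
  toFun : ℝ → ℂ
  deriv : ℝ → ℂ
  memL2 : MemLp toFun 2 (volume : Measure ℝ)
  deriv_memL2 : MemLp deriv 2 (volume : Measure ℝ)
  integral_deriv : ∀ x : ℝ, toFun x = toFun 0 + ∫ t in (0:ℝ)..x, deriv t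

/-- The `L²(ℝ)` norm. -/
def L2norm (f : ℝ → ℂ) : ℝ := (eLpNorm f 2 (volume : Measure ℝ)).toReal

/-- The one-dimensional Pekar functional
`E₀(φ) = ∫ |φ′|² − (α/2) ∫ |φ|⁴ − β |φ(0)|²`. -/
def pekarE0 (α β : ℝ) (φ : H1) : ℝ :=
  (∫ x : ℝ, ‖φ.deriv x‖ ^ 2) - α / 2 * (∫ x : ℝ, ‖φ.toFun x‖ ^ 4) - β * ‖φ.toFun 0‖ ^ 2

/-- The ground-state energy `e₀ = inf {E₀(φ) : ‖φ‖₂ = 1}`. -/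
def groundE0 (α β : ℝ) : ℝ :=
  sInf { r : ℝ | ∃ φ : H1, L2norm φ.toFun = 1 ∧ pekarE0 α β φ = r }


/-- The translation-invariant Pekar functional `E_T(φ) = ∫ |φ′|² − (α/2) ∫ |φ|⁴`. -/
def pekarET (α : ℝ) (φ : H1) : ℝ :=
  (∫ x : ℝ, ‖φ.deriv x‖ ^ 2) - α / 2 * (∫ x : ℝ, ‖φ.toFun x‖ ^ 4)

/-- The translation-invariant ground-state energy `e_T = inf {E_T(φ) : ‖φ‖₂ = 1}`. -/
def groundET (α : ℝ) : ℝ :=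
  sInf { r : ℝ | ∃ φ : H1, L2norm φ.toFun = 1 ∧ pekarET α φ = r }

/-! ### Auxiliary lemmas -/

section PekarAux

open scoped ENNReal NNReal

lemma integrable_norm_sq {f : ℝ → ℂ} (hf : MemLp f 2 volume) :
    Integrable (fun x => ‖f x‖ ^ 2) volume := by
  have h := hf.integrable_norm_rpow two_ne_zero ENNReal.ofNat_ne_top
  simp only [ENNReal.toReal_ofNat] at h
  convert h using 2 with x
  rw [← Real.rpow_natCast ‖f x‖ 2]
  norm_num

lemma L2norm_eq {f : ℝ → ℂ} (hf : MemLp f 2 volume) :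
    L2norm f = Real.sqrt (∫ x, ‖f x‖ ^ 2) := by
  rw [L2norm, hf.eLpNorm_eq_integral_rpow_norm two_ne_zero ENNReal.ofNat_ne_top,
    ENNReal.toReal_ofReal (by positivity)]
  simp only [ENNReal.toReal_ofNat]
  rw [Real.sqrt_eq_rpow]
  norm_num

lemma memL2_intervalIntegrable {f : ℝ → ℂ} (hf : MemLp f 2 volume) (a b : ℝ) :
    IntervalIntegrable f volume a b := by
  rw [intervalIntegrable_iff]
  have h2 : MemLp f 2 (volume.restrict (Set.uIoc a b)) := hf.restrict _
  haveI : Fact ((volume : Measure ℝ) (Set.uIoc a b) < ⊤) :=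
    ⟨lt_of_le_of_lt (measure_mono Set.uIoc_subset_uIcc) isCompact_uIcc.measure_lt_top⟩
  exact (h2.mono_exponent (by norm_num : (1:ℝ≥0∞) ≤ 2)).integrable le_rfl

lemma H1.sub_eq (φ : H1) (a b : ℝ) :
    φ.toFun b - φ.toFun a = ∫ t in a..b, φ.deriv t := by
  rw [φ.integral_deriv a, φ.integral_deriv b]
  have h := intervalIntegral.integral_add_adjacent_intervals
    (memL2_intervalIntegrable φ.deriv_memL2 0 a) (memL2_intervalIntegrable φ.deriv_memL2 a b)
  rw [← h]; ring

lemma H1.continuous (φ : H1) : Continuous φ.toFun := by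
  have h : Continuous fun x => ∫ t in (0:ℝ)..x, φ.deriv t :=
    intervalIntegral.continuous_primitive (fun a b => memL2_intervalIntegrable φ.deriv_memL2 a b) 0
  have h2 : φ.toFun = fun x => φ.toFun 0 + ∫ t in (0:ℝ)..x, φ.deriv t := funext φ.integral_deriv
  rw [h2]
  exact continuous_const.add h

lemma interval_CS {f : ℝ → ℂ} (hf : MemLp f 2 volume) (a : ℝ) {L : ℝ} (hL : 0 < L) :
    ∫ t in a..a+L, ‖f t‖ ≤ Real.sqrt L * Real.sqrt (∫ x, ‖f x‖ ^ 2) := by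
  have hab : a ≤ a + L := by linarith
  have hmeas : (volume : Measure ℝ) (Set.Ioc a (a+L)) = ENNReal.ofReal L := by
    rw [Real.volume_Ioc]; ring_nf
  haveI : Fact ((volume : Measure ℝ) (Set.Ioc a (a+L)) < ⊤) :=
    ⟨by rw [hmeas]; exact ENNReal.ofReal_lt_top⟩
  set μ := (volume : Measure ℝ).restrict (Set.Ioc a (a+L)) with hμ
  have hconj : Real.HolderConjugate 2 2 := ⟨by norm_num, by norm_num, by norm_num⟩
  have memf : MemLp (fun t => ‖f t‖) (ENNReal.ofReal 2) μ := by
    rw [show ENNReal.ofReal 2 = 2 by norm_num]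
    exact (hf.restrict _).norm
  have memg : MemLp (fun _ : ℝ => (1:ℝ)) (ENNReal.ofReal 2) μ := memLp_const 1
  have hCS := integral_mul_le_Lp_mul_Lq_of_nonneg hconj
    (Eventually.of_forall fun x => norm_nonneg (f x))
    (Eventually.of_forall fun _ => zero_le_one) memf memg
  simp only [mul_one, one_rpow] at hCS
  have h1 : ∫ t, (1:ℝ) ∂μ = L := by
    simp [hμ, hmeas, ENNReal.toReal_ofReal hL.le, hL.le]
  have h2 : ∫ t, ‖f t‖ ^ (2:ℝ) ∂μ ≤ ∫ x, ‖f x‖ ^ 2 := by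
    have he : ∀ t, ‖f t‖ ^ (2:ℝ) = ‖f t‖ ^ (2:ℕ) := fun t => by
      rw [← Real.rpow_natCast ‖f t‖ 2]; norm_num
    simp only [he]
    exact setIntegral_le_integral (integrable_norm_sq hf)
      (Eventually.of_forall fun t => by positivity)
  have h3 : (∫ t, ‖f t‖ ^ (2:ℝ) ∂μ) ^ ((1:ℝ)/2) ≤ (∫ x, ‖f x‖ ^ 2) ^ ((1:ℝ)/2) :=
    Real.rpow_le_rpow (by positivity) h2 (by norm_num)
  calc ∫ t in a..a+L, ‖f t‖ = ∫ t, ‖f t‖ ∂μ := by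
        rw [intervalIntegral.integral_of_le hab]
    _ ≤ (∫ t, ‖f t‖ ^ (2:ℝ) ∂μ) ^ ((1:ℝ)/2) * (∫ t, (1:ℝ) ∂μ) ^ ((1:ℝ)/2) := hCS
    _ ≤ Real.sqrt (∫ x, ‖f x‖ ^ 2) * Real.sqrt L := by
        rw [h1]
        have h4 := mul_le_mul_of_nonneg_right h3 (by positivity : (0:ℝ) ≤ L ^ ((1:ℝ)/2))
        simpa [Real.sqrt_eq_rpow] using h4
    _ = Real.sqrt L * Real.sqrt (∫ x, ‖f x‖ ^ 2) := mul_comm _ _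

lemma H1.norm_le (φ : H1) {L : ℝ} (hL : 0 < L) (x : ℝ) :
    ‖φ.toFun x‖ ≤ Real.sqrt ((∫ y, ‖φ.toFun y‖^2) / L)
      + Real.sqrt (L * (∫ y, ‖φ.deriv y‖^2)) := by
  set N := ∫ y, ‖φ.toFun y‖^2 with hN
  set K := ∫ y, ‖φ.deriv y‖^2 with hK
  have hN0 : 0 ≤ N := integral_nonneg fun _ => by positivity
  have hK0 : 0 ≤ K := integral_nonneg fun _ => by positivity
  set C := ∫ t in x..x+L, ‖φ.deriv t‖ with hC
  have key : ∀ y ∈ Set.Icc x (x+L), ‖φ.toFun x‖ ≤ ‖φ.toFun y‖ + C := by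
    intro y hy
    have h1 : φ.toFun x = φ.toFun y - ∫ t in x..y, φ.deriv t := by
      have h := φ.sub_eq x y
      rw [← h]; ring
    calc ‖φ.toFun x‖ ≤ ‖φ.toFun y‖ + ‖∫ t in x..y, φ.deriv t‖ := by
          rw [h1]; exact norm_sub_le _ _
      _ ≤ ‖φ.toFun y‖ + ∫ t in x..y, ‖φ.deriv t‖ := by
          gcongr
          exact intervalIntegral.norm_integral_le_integral_norm hy.1
      _ ≤ ‖φ.toFun y‖ + C := by
          gcongr
          exact intervalIntegral.integral_mono_interval le_rfl hy.1 hy.2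
            (Eventually.of_forall fun t => norm_nonneg _)
            ((memL2_intervalIntegrable φ.deriv_memL2 x (x+L)).norm)
  have hcont : Continuous fun y => ‖φ.toFun y‖ := φ.continuous.norm
  have int0 : IntervalIntegrable (fun y => ‖φ.toFun y‖) volume x (x+L) :=
    hcont.intervalIntegrable _ _
  have int1 : IntervalIntegrable (fun y => ‖φ.toFun y‖ + C) volume x (x+L) :=
    (hcont.add continuous_const).intervalIntegrable _ _
  have hmono := intervalIntegral.integral_mono_on (by linarith : x ≤ x + L)
    (intervalIntegrable_const : IntervalIntegrable (fun _ => ‖φ.toFun x‖) volume x (x+L))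
    int1 key
  rw [intervalIntegral.integral_const, intervalIntegral.integral_add int0
    (intervalIntegrable_const)] at hmono
  simp only [intervalIntegral.integral_const, smul_eq_mul, add_sub_cancel_left] at hmono
  have cs1 : ∫ y in x..x+L, ‖φ.toFun y‖ ≤ Real.sqrt L * Real.sqrt N :=
    interval_CS φ.memL2 x hL
  have cs2 : C ≤ Real.sqrt L * Real.sqrt K := interval_CS φ.deriv_memL2 x hL
  have hsL : Real.sqrt L * Real.sqrt L = L := Real.mul_self_sqrt hL.le
  have hsLpos : 0 < Real.sqrt L := Real.sqrt_pos.2 hL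
  have e1 : Real.sqrt (N / L) = Real.sqrt N / Real.sqrt L := Real.sqrt_div hN0 L
  have e2 : Real.sqrt (L * K) = Real.sqrt L * Real.sqrt K := Real.sqrt_mul hL.le K
  rw [e1, e2]
  have hsLne : Real.sqrt L ≠ 0 := ne_of_gt hsLpos
  have expand : L * (Real.sqrt N / Real.sqrt L + Real.sqrt L * Real.sqrt K)
      = Real.sqrt L * Real.sqrt N + L * (Real.sqrt L * Real.sqrt K) := by
    field_simp
    linear_combination (-(Real.sqrt N)) * Real.sq_sqrt hL.le
  have hfinal : L * ‖φ.toFun x‖ ≤ L * (Real.sqrt N / Real.sqrt L + Real.sqrt L * Real.sqrt K) := by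
    rw [expand]
    calc L * ‖φ.toFun x‖ ≤ (∫ y in x..x+L, ‖φ.toFun y‖) + L * C := hmono
      _ ≤ Real.sqrt L * Real.sqrt N + L * (Real.sqrt L * Real.sqrt K) := by gcongr
  exact le_of_mul_le_mul_left hfinal hL

lemma N_nonneg (φ : H1) : 0 ≤ ∫ y, ‖φ.toFun y‖^2 := integral_nonneg fun _ => by positivity
lemma K_nonneg (φ : H1) : 0 ≤ ∫ y, ‖φ.deriv y‖^2 := integral_nonneg fun _ => by positivity
lemma P_nonneg (φ : H1) : 0 ≤ ∫ y, ‖φ.toFun y‖^4 := integral_nonneg fun _ => by positivity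

lemma L2norm_eq_one_iff (φ : H1) : L2norm φ.toFun = 1 ↔ (∫ y, ‖φ.toFun y‖^2) = 1 := by
  rw [L2norm_eq φ.memL2]
  exact Real.sqrt_eq_one

lemma H1.norm_le' (φ : H1) (x : ℝ) :
    ‖φ.toFun x‖ ≤ Real.sqrt (∫ y, ‖φ.toFun y‖^2) + Real.sqrt (∫ y, ‖φ.deriv y‖^2) := by
  have h := φ.norm_le one_pos x
  simpa using h

lemma H1.integrable_pow4 (φ : H1) : Integrable (fun x => ‖φ.toFun x‖ ^ 4) volume := by
  set C := Real.sqrt (∫ y, ‖φ.toFun y‖^2) + Real.sqrt (∫ y, ‖φ.deriv y‖^2) with hC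
  have hC0 : 0 ≤ C := by positivity
  apply Integrable.mono' ((integrable_norm_sq φ.memL2).const_mul (C^2))
  · exact ((φ.continuous.norm.pow 4)).aestronglyMeasurable
  · refine Eventually.of_forall fun x => ?_
    rw [Real.norm_of_nonneg (by positivity)]
    have h := φ.norm_le' x
    have h2 : ‖φ.toFun x‖^2 ≤ C^2 := by nlinarith [norm_nonneg (φ.toFun x)]
    calc ‖φ.toFun x‖^4 = ‖φ.toFun x‖^2 * ‖φ.toFun x‖^2 := by ring
      _ ≤ C^2 * ‖φ.toFun x‖^2 := by nlinarith [norm_nonneg (φ.toFun x), sq_nonneg (‖φ.toFun x‖)]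

lemma P_le (φ : H1) {c : ℝ} (hc : ∀ x, ‖φ.toFun x‖^2 ≤ c) :
    (∫ y, ‖φ.toFun y‖^4) ≤ c * (∫ y, ‖φ.toFun y‖^2) := by
  rw [← integral_const_mul]
  apply integral_mono φ.integrable_pow4 ((integrable_norm_sq φ.memL2).const_mul c)
  intro x
  calc ‖φ.toFun x‖^4 = ‖φ.toFun x‖^2 * ‖φ.toFun x‖^2 := by ring
    _ ≤ c * ‖φ.toFun x‖^2 := by nlinarith [hc x, sq_nonneg (‖φ.toFun x‖), norm_nonneg (φ.toFun x)]

lemma K_pos (φ : H1) (hφ : L2norm φ.toFun = 1) : 0 < ∫ y, ‖φ.deriv y‖^2 := by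
  rcases (K_nonneg φ).lt_or_eq with h | h
  · exact h
  · exfalso
    have hN : (∫ y, ‖φ.toFun y‖^2) = 1 := (L2norm_eq_one_iff φ).1 hφ
    have hzero : ∀ x : ℝ, φ.toFun x = 0 := by
      intro x
      have hb : ∀ L : ℝ, 0 < L → ‖φ.toFun x‖ ≤ Real.sqrt (1 / L) := by
        intro L hL
        have h2 := φ.norm_le hL x
        rw [hN, ← h] at h2
        simpa using h2
      by_contra hx
      have hpos : 0 < ‖φ.toFun x‖ := norm_pos_iff.2 hx
      set ε := ‖φ.toFun x‖ with hε
      have hL : (0:ℝ) < 4 / ε^2 := by positivity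
      have hb2 := hb (4/ε^2) hL
      have e : (1:ℝ) / (4/ε^2) = (ε/2)^2 := by field_simp; ring
      rw [e, Real.sqrt_sq (by positivity)] at hb2
      linarith
    have h0 : (∫ y, ‖φ.toFun y‖^2) = 0 := by
      simp [funext hzero]
    rw [hN] at h0; norm_num at h0

lemma P_pos (φ : H1) (hφ : L2norm φ.toFun = 1) : 0 < ∫ y, ‖φ.toFun y‖^4 := by
  rcases (P_nonneg φ).lt_or_eq with h | h
  · exact h
  · exfalso
    have hN : (∫ y, ‖φ.toFun y‖^2) = 1 := (L2norm_eq_one_iff φ).1 hφ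
    have h0 : (fun y => ‖φ.toFun y‖^4) =ᵐ[volume] 0 :=
      (integral_eq_zero_iff_of_nonneg (fun x => by positivity) φ.integrable_pow4).1 h.symm
    have h1 : (fun y => ‖φ.toFun y‖^2) =ᵐ[volume] 0 := by
      filter_upwards [h0] with y hy
      simp only [Pi.zero_apply] at hy ⊢
      have h4 : ‖φ.toFun y‖ = 0 := (pow_eq_zero_iff (show (4:ℕ) ≠ 0 by norm_num)).1 hy
      rw [h4]; norm_num
    have h2 : (∫ y, ‖φ.toFun y‖^2) = 0 := by
      rw [integral_congr_ae h1]; simp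
    rw [hN] at h2; norm_num at h2

lemma H1.sup_bound (φ : H1) (hφ : L2norm φ.toFun = 1) (x : ℝ) :
    ‖φ.toFun x‖^2 ≤ 4 * Real.sqrt (∫ y, ‖φ.deriv y‖^2) := by
  set K := ∫ y, ‖φ.deriv y‖^2 with hK
  have hKpos : 0 < K := K_pos φ hφ
  have hN : (∫ y, ‖φ.toFun y‖^2) = 1 := (L2norm_eq_one_iff φ).1 hφ
  have hsK : 0 < Real.sqrt K := Real.sqrt_pos.2 hKpos
  have hL : (0:ℝ) < 1 / Real.sqrt K := by positivity
  have h := φ.norm_le hL x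
  rw [hN] at h
  have e1 : (1:ℝ) / (1 / Real.sqrt K) = Real.sqrt K := by field_simp
  have e2 : (1 / Real.sqrt K) * K = Real.sqrt K := by
    rw [div_mul_eq_mul_div, one_mul, div_eq_iff hsK.ne', Real.mul_self_sqrt hKpos.le]
  rw [e1, e2] at h
  have h1 : ‖φ.toFun x‖ ≤ 2 * Real.sqrt (Real.sqrt K) := by linarith
  have h2 : ‖φ.toFun x‖^2 ≤ (2 * Real.sqrt (Real.sqrt K))^2 := by
    nlinarith [norm_nonneg (φ.toFun x)]
  calc ‖φ.toFun x‖^2 ≤ (2 * Real.sqrt (Real.sqrt K))^2 := h2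
    _ = 4 * Real.sqrt K := by
        rw [mul_pow, Real.sq_sqrt (Real.sqrt_nonneg K)]; norm_num

/-- Translation of an H1 function. -/
def H1.translate (φ : H1) (a : ℝ) : H1 where
  toFun := fun x => φ.toFun (x + a)
  deriv := fun x => φ.deriv (x + a)
  memL2 := φ.memL2.comp_measurePreserving (measurePreserving_add_right volume a)
  deriv_memL2 := φ.deriv_memL2.comp_measurePreserving (measurePreserving_add_right volume a)
  integral_deriv := by
    intro x
    have h2 : (∫ t in (0:ℝ)..x, φ.deriv (t + a)) = ∫ t in a..x+a, φ.deriv t := by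
      simpa using intervalIntegral.integral_comp_add_right (a := (0:ℝ)) (b := x)
        (fun t => φ.deriv t) a
    rw [h2]
    simp only [zero_add]
    rw [← φ.sub_eq a (x+a)]
    ring

lemma translate_N (φ : H1) (a : ℝ) :
    (∫ y, ‖(φ.translate a).toFun y‖^2) = ∫ y, ‖φ.toFun y‖^2 :=
  integral_add_right_eq_self (fun y => ‖φ.toFun y‖^2) a

lemma translate_K (φ : H1) (a : ℝ) :
    (∫ y, ‖(φ.translate a).deriv y‖^2) = ∫ y, ‖φ.deriv y‖^2 :=
  integral_add_right_eq_self (fun y => ‖φ.deriv y‖^2) a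

lemma translate_P (φ : H1) (a : ℝ) :
    (∫ y, ‖(φ.translate a).toFun y‖^4) = ∫ y, ‖φ.toFun y‖^4 :=
  integral_add_right_eq_self (fun y => ‖φ.toFun y‖^4) a

lemma translate_at_zero (φ : H1) (a : ℝ) : (φ.translate a).toFun 0 = φ.toFun a := by
  simp [H1.translate]

/-- Scalar multiple of an H1 function. -/
def H1.rsmul (c : ℝ) (φ : H1) : H1 where
  toFun := fun x => c • φ.toFun x
  deriv := fun x => c • φ.deriv x
  memL2 := φ.memL2.const_smul c
  deriv_memL2 := φ.deriv_memL2.const_smul c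
  integral_deriv := by
    intro x
    rw [intervalIntegral.integral_smul, ← smul_add, ← φ.integral_deriv x]

lemma rsmul_N (c : ℝ) (φ : H1) :
    (∫ y, ‖(H1.rsmul c φ).toFun y‖^2) = c^2 * ∫ y, ‖φ.toFun y‖^2 := by
  simp only [H1.rsmul, norm_smul, Real.norm_eq_abs, mul_pow, sq_abs]
  rw [integral_const_mul]

/-- Rescaling of an H1 function. -/
def H1.scale (φ : H1) {l : ℝ} (hl : 0 < l) : H1 where
  toFun := fun x => Real.sqrt l • φ.toFun (l * x)
  deriv := fun x => (Real.sqrt l * l) • φ.deriv (l * x)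
  memL2 := by
    show MemLp (Real.sqrt l • fun x => φ.toFun (l * x)) 2 volume
    apply MemLp.const_smul
    have hemb : MeasurableEmbedding (fun x : ℝ => l * x) :=
      measurableEmbedding_mulLeft₀ (ne_of_gt hl)
    have h : MemLp φ.toFun 2 (Measure.map (fun x => l * x) volume) := by
      rw [Real.map_volume_mul_left (ne_of_gt hl)]
      exact φ.memL2.smul_measure ENNReal.ofReal_ne_top
    exact (hemb.memLp_map_measure_iff).1 h
  deriv_memL2 := by
    show MemLp ((Real.sqrt l * l) • fun x => φ.deriv (l * x)) 2 volume
    apply MemLp.const_smul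
    have hemb : MeasurableEmbedding (fun x : ℝ => l * x) :=
      measurableEmbedding_mulLeft₀ (ne_of_gt hl)
    have h : MemLp φ.deriv 2 (Measure.map (fun x => l * x) volume) := by
      rw [Real.map_volume_mul_left (ne_of_gt hl)]
      exact φ.deriv_memL2.smul_measure ENNReal.ofReal_ne_top
    exact (hemb.memLp_map_measure_iff).1 h
  integral_deriv := by
    intro x
    show Real.sqrt l • φ.toFun (l * x)
      = Real.sqrt l • φ.toFun (l * 0) + ∫ t in (0:ℝ)..x, (Real.sqrt l * l) • φ.deriv (l * t)
    rw [intervalIntegral.integral_smul, mul_smul,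
      intervalIntegral.smul_integral_comp_mul_left (fun t => φ.deriv t) l, mul_zero,
      ← smul_add, ← φ.integral_deriv (l * x)]

lemma scale_N (φ : H1) {l : ℝ} (hl : 0 < l) :
    (∫ y, ‖(φ.scale hl).toFun y‖^2) = ∫ y, ‖φ.toFun y‖^2 := by
  have h : ∀ y : ℝ, ‖(φ.scale hl).toFun y‖^2 = l * ‖φ.toFun (l * y)‖^2 := by
    intro y
    simp only [H1.scale, norm_smul, Real.norm_eq_abs, mul_pow, sq_abs,
      abs_of_nonneg (Real.sqrt_nonneg l), Real.sq_sqrt hl.le]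
  simp only [h]
  rw [integral_const_mul, Measure.integral_comp_mul_left (fun y => ‖φ.toFun y‖^2) l]
  rw [abs_of_pos (inv_pos.2 hl), smul_eq_mul, ← mul_assoc, mul_inv_cancel₀ (ne_of_gt hl), one_mul]

lemma scale_P (φ : H1) {l : ℝ} (hl : 0 < l) :
    (∫ y, ‖(φ.scale hl).toFun y‖^4) = l * ∫ y, ‖φ.toFun y‖^4 := by
  have h : ∀ y : ℝ, ‖(φ.scale hl).toFun y‖^4 = l^2 * ‖φ.toFun (l * y)‖^4 := by
    intro y
    simp only [H1.scale, norm_smul, Real.norm_eq_abs, mul_pow,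
      abs_of_nonneg (Real.sqrt_nonneg l)]
    rw [show Real.sqrt l ^ 4 = (Real.sqrt l ^ 2)^2 by ring, Real.sq_sqrt hl.le]
  simp only [h]
  rw [integral_const_mul, Measure.integral_comp_mul_left (fun y => ‖φ.toFun y‖^4) l]
  rw [abs_of_pos (inv_pos.2 hl), smul_eq_mul]
  field_simp

lemma scale_K (φ : H1) {l : ℝ} (hl : 0 < l) :
    (∫ y, ‖(φ.scale hl).deriv y‖^2) = l^2 * ∫ y, ‖φ.deriv y‖^2 := by
  have h : ∀ y : ℝ, ‖(φ.scale hl).deriv y‖^2 = l^3 * ‖φ.deriv (l * y)‖^2 := by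
    intro y
    simp only [H1.scale, norm_smul, Real.norm_eq_abs, mul_pow, sq_abs]
    rw [Real.sq_sqrt hl.le]
    ring
  simp only [h]
  rw [integral_const_mul, Measure.integral_comp_mul_left (fun y => ‖φ.deriv y‖^2) l]
  rw [abs_of_pos (inv_pos.2 hl), smul_eq_mul]
  field_simp

lemma gauss_hasDerivAt (t : ℝ) :
    HasDerivAt (fun s : ℝ => Real.exp (-(s^2))) ((-2*t) * Real.exp (-(t^2))) t := by
  have h1 : HasDerivAt (fun s : ℝ => -(s^2)) (-(2*t)) t := by
    simpa using (hasDerivAt_pow 2 t).const_mul (-1)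
  have h2 := h1.exp
  convert h2 using 1
  ring

/-- The Gaussian as an H1 element. -/
def gaussH1 : H1 where
  toFun := fun x => ((Real.exp (-(x^2)) : ℝ) : ℂ)
  deriv := fun x => (((-2*x) * Real.exp (-(x^2)) : ℝ) : ℂ)
  memL2 := by
    rw [memLp_two_iff_integrable_sq_norm
      (Continuous.aestronglyMeasurable (by continuity :
        Continuous fun x : ℝ => ((Real.exp (-(x^2)) : ℝ) : ℂ)))]
    refine (integrable_exp_neg_mul_sq (by norm_num : (0:ℝ) < 2)).congr
      (Eventually.of_forall fun x => ?_)
    show Real.exp (-2 * x^2) = ‖((Real.exp (-(x^2)) : ℝ) : ℂ)‖ ^ 2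
    rw [Complex.norm_real, Real.norm_eq_abs, abs_of_pos (Real.exp_pos _), ← Real.exp_nat_mul]
    norm_num
  deriv_memL2 := by
    rw [memLp_two_iff_integrable_sq_norm
      (Continuous.aestronglyMeasurable (by continuity :
        Continuous fun x : ℝ => (((-2*x) * Real.exp (-(x^2)) : ℝ) : ℂ)))]
    apply Integrable.mono' ((integrable_exp_neg_mul_sq (by norm_num : (0:ℝ) < 1)).const_mul 4)
    · exact (Continuous.aestronglyMeasurable (by continuity :
        Continuous fun x : ℝ => ‖(((-2*x) * Real.exp (-(x^2)) : ℝ) : ℂ)‖ ^ 2))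
    · refine Eventually.of_forall fun x => ?_
      rw [Real.norm_of_nonneg (by positivity), Complex.norm_real, Real.norm_eq_abs]
      have hx2 : x^2 ≤ Real.exp (x^2) := by
        nlinarith [Real.add_one_le_exp (x^2)]
      have e1 : |(-2*x) * Real.exp (-(x^2))|^2 = 4 * x^2 * Real.exp (-(x^2)) * Real.exp (-(x^2)) := by
        rw [sq_abs]; ring
      rw [e1]
      have h3 : x^2 * Real.exp (-(x^2)) ≤ 1 := by
        rw [Real.exp_neg]
        rw [mul_inv_le_iff₀ (Real.exp_pos _)]
        simpa using hx2
      have h4 : Real.exp (-(x^2)) = Real.exp (-1 * x^2) := by ring_nf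
      nlinarith [Real.exp_pos (-(x^2)), Real.exp_pos (-1 * x^2), h3,
        mul_le_mul_of_nonneg_right h3 (Real.exp_pos (-(x^2))).le]
  integral_deriv := by
    intro x
    have hFTC : ∫ t in (0:ℝ)..x, (-2*t) * Real.exp (-(t^2))
        = Real.exp (-(x^2)) - Real.exp (-(0^2)) := by
      apply intervalIntegral.integral_eq_sub_of_hasDerivAt (fun t _ => gauss_hasDerivAt t)
      exact (Continuous.intervalIntegrable (by continuity) 0 x)
    have hcast : (∫ t in (0:ℝ)..x, (((-2*t) * Real.exp (-(t^2)) : ℝ) : ℂ))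
        = ((∫ t in (0:ℝ)..x, (-2*t) * Real.exp (-(t^2)) : ℝ) : ℂ) :=
      intervalIntegral.integral_ofReal
    rw [hcast, hFTC]
    push_cast
    ring_nf

lemma gauss_N : (∫ y, ‖gaussH1.toFun y‖^2) = Real.sqrt (Real.pi / 2) := by
  have h : ∀ y : ℝ, ‖gaussH1.toFun y‖^2 = Real.exp (-2 * y^2) := by
    intro y
    simp only [gaussH1, Complex.norm_real, Real.norm_eq_abs, abs_of_pos (Real.exp_pos _)]
    rw [← Real.exp_nat_mul]; norm_num
  simp only [h]
  exact integral_gaussian 2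

lemma gauss_N_pos : 0 < ∫ y, ‖gaussH1.toFun y‖^2 := by
  rw [gauss_N]
  positivity

/-- The normalized Gaussian. -/
def normGauss : H1 := H1.rsmul (1 / Real.sqrt (∫ y, ‖gaussH1.toFun y‖^2)) gaussH1

lemma normGauss_norm : L2norm normGauss.toFun = 1 := by
  rw [L2norm_eq_one_iff, normGauss, rsmul_N]
  have hG := gauss_N_pos
  rw [div_pow, one_pow, Real.sq_sqrt hG.le, one_div, inv_mul_cancel₀ (ne_of_gt hG)]

/-- Lower bound for the translation-invariant functional. -/
lemma pekarET_lower (α : ℝ) (hα : 0 ≤ α) (φ : H1) (hφ : L2norm φ.toFun = 1) :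
    -(α^2) ≤ pekarET α φ := by
  have hN : (∫ y, ‖φ.toFun y‖^2) = 1 := (L2norm_eq_one_iff φ).1 hφ
  have hP : (∫ y, ‖φ.toFun y‖^4) ≤ 4 * Real.sqrt (∫ y, ‖φ.deriv y‖^2) := by
    have h := P_le φ (φ.sup_bound hφ)
    rw [hN, mul_one] at h
    exact h
  have hKs : Real.sqrt (∫ y, ‖φ.deriv y‖^2) ^ 2 = ∫ y, ‖φ.deriv y‖^2 :=
    Real.sq_sqrt (K_nonneg φ)
  have hPn := P_nonneg φ
  unfold pekarET
  nlinarith [Real.sqrt_nonneg (∫ y, ‖φ.deriv y‖^2),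
    sq_nonneg (Real.sqrt (∫ y, ‖φ.deriv y‖^2) - α), hP, hKs]

/-- Lower bound for the full functional. -/
lemma pekarE0_lower (α β : ℝ) (hα : 0 ≤ α) (hβ : 0 ≤ β) (φ : H1) (hφ : L2norm φ.toFun = 1) :
    -((α + 2*β)^2) ≤ pekarE0 α β φ := by
  have hN : (∫ y, ‖φ.toFun y‖^2) = 1 := (L2norm_eq_one_iff φ).1 hφ
  have hP : (∫ y, ‖φ.toFun y‖^4) ≤ 4 * Real.sqrt (∫ y, ‖φ.deriv y‖^2) := by
    have h := P_le φ (φ.sup_bound hφ)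
    rw [hN, mul_one] at h
    exact h
  have h0 : ‖φ.toFun 0‖^2 ≤ 4 * Real.sqrt (∫ y, ‖φ.deriv y‖^2) := φ.sup_bound hφ 0
  have hKs : Real.sqrt (∫ y, ‖φ.deriv y‖^2) ^ 2 = ∫ y, ‖φ.deriv y‖^2 :=
    Real.sq_sqrt (K_nonneg φ)
  have hPn := P_nonneg φ
  unfold pekarE0
  nlinarith [Real.sqrt_nonneg (∫ y, ‖φ.deriv y‖^2),
    sq_nonneg (Real.sqrt (∫ y, ‖φ.deriv y‖^2) - (α + 2*β)), hP, hKs, h0,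
    sq_nonneg (‖φ.toFun 0‖)]

lemma bddBelow_ST (α : ℝ) (hα : 0 ≤ α) :
    BddBelow { r : ℝ | ∃ φ : H1, L2norm φ.toFun = 1 ∧ pekarET α φ = r } := by
  refine ⟨-(α^2), fun r hr => ?_⟩
  obtain ⟨φ, h1, h2⟩ := hr
  rw [← h2]
  exact pekarET_lower α hα φ h1

lemma bddBelow_S0 (α β : ℝ) (hα : 0 ≤ α) (hβ : 0 ≤ β) :
    BddBelow { r : ℝ | ∃ φ : H1, L2norm φ.toFun = 1 ∧ pekarE0 α β φ = r } := by
  refine ⟨-((α + 2*β)^2), fun r hr => ?_⟩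
  obtain ⟨φ, h1, h2⟩ := hr
  rw [← h2]
  exact pekarE0_lower α β hα hβ φ h1

/-- The translation-invariant ground-state energy is negative. -/
lemma groundET_neg (α : ℝ) (hα : 0 < α) : groundET α < 0 := by
  set K1 := ∫ y, ‖normGauss.deriv y‖^2 with hK1
  set P1 := ∫ y, ‖normGauss.toFun y‖^4 with hP1
  have hK1pos : 0 < K1 := K_pos normGauss normGauss_norm
  have hP1pos : 0 < P1 := P_pos normGauss normGauss_norm
  set l := α * P1 / (4 * K1) with hl
  have hlpos : 0 < l := by positivity
  set ψ := normGauss.scale hlpos with hψ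
  have hψnorm : L2norm ψ.toFun = 1 := by
    rw [L2norm_eq_one_iff, hψ, scale_N]
    exact (L2norm_eq_one_iff normGauss).1 normGauss_norm
  have hval : pekarET α ψ = l^2 * K1 - α/2 * (l * P1) := by
    unfold pekarET
    rw [hψ, scale_K, scale_P]
  have hmem : pekarET α ψ ∈ { r : ℝ | ∃ φ : H1, L2norm φ.toFun = 1 ∧ pekarET α φ = r } :=
    ⟨ψ, hψnorm, rfl⟩
  have hle : groundET α ≤ pekarET α ψ := csInf_le (bddBelow_ST α hα.le) hmem
  have hneg : pekarET α ψ < 0 := by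
    rw [hval]
    have e : l * K1 = α * P1 / 4 := by
      rw [hl]; field_simp
    have : l^2 * K1 = l * (l * K1) := by ring
    rw [this, e]
    have h2 : l * (α * P1 / 4) - α / 2 * (l * P1) = -(l * α * P1 / 4) := by ring
    rw [h2]
    have hp : 0 < l * α * P1 / 4 := by positivity
    linarith
  exact lt_of_le_of_lt hle hneg

end PekarAux

/-- **Strict binding inequality:** `e₀ < e_T`. -/
theorem groundE0_lt_groundET (α β : ℝ) (hα : 0 < α) (hβ : 0 < β) :
    groundE0 α β < groundET α := by
  set S := { r : ℝ | ∃ φ : H1, L2norm φ.toFun = 1 ∧ pekarET α φ = r } with hS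
  have hSne : S.Nonempty := ⟨pekarET α normGauss, normGauss, normGauss_norm, rfl⟩
  set m := groundET α with hm
  have hmneg : m < 0 := groundET_neg α hα
  set ε := min (-m/2) (β*(-m)/(4*α)) with hε
  have hεpos : 0 < ε := lt_min (by linarith) (by
    have : 0 < -m := by linarith
    positivity)
  obtain ⟨r, hrS, hr⟩ := Real.lt_sInf_add_pos hSne hεpos
  obtain ⟨φ, hφ1, hφ2⟩ := hrS
  have hrm : r < m + ε := by
    have : sInf S = m := rfl
    rw [this] at hr
    exact hr
  have hN : (∫ y, ‖φ.toFun y‖^2) = 1 := (L2norm_eq_one_iff φ).1 hφ1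
  have hK0 := K_nonneg φ
  have he1 : ε ≤ -m/2 := min_le_left _ _
  have he2 : ε ≤ β*(-m)/(4*α) := min_le_right _ _
  -- P is large
  have hPbig : -m/α < ∫ y, ‖φ.toFun y‖^4 := by
    have h2 : (∫ y, ‖φ.deriv y‖^2) - α/2 * (∫ y, ‖φ.toFun y‖^4) = r := hφ2
    have h3 : α/2 * (∫ y, ‖φ.toFun y‖^4) > -m - ε := by nlinarith
    have h4 : -m - ε ≥ -m/2 := by linarith
    rw [div_lt_iff₀ hα]
    nlinarith
  -- find a point where |φ|² is large
  have hex : ∃ a : ℝ, -m/(2*α) < ‖φ.toFun a‖^2 := by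
    by_contra hcon
    push_neg at hcon
    have hle := P_le φ hcon
    rw [hN, mul_one] at hle
    have : -m/α ≤ -m/(2*α) := le_trans hPbig.le hle
    rw [div_le_div_iff₀ hα (by positivity)] at this
    nlinarith
  obtain ⟨a, ha⟩ := hex
  set ψ := φ.translate a with hψ
  have hψnorm : L2norm ψ.toFun = 1 := by
    rw [L2norm_eq_one_iff, hψ, translate_N, hN]
  have hval : pekarE0 α β ψ = r - β * ‖φ.toFun a‖^2 := by
    unfold pekarE0
    rw [hψ, translate_K, translate_P, translate_at_zero, ← hφ2]
    unfold pekarET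
    ring
  have hmem : pekarE0 α β ψ ∈ { r : ℝ | ∃ φ : H1, L2norm φ.toFun = 1 ∧ pekarE0 α β φ = r } :=
    ⟨ψ, hψnorm, rfl⟩
  have h1 : groundE0 α β ≤ pekarE0 α β ψ := csInf_le (bddBelow_S0 α β hα.le hβ.le) hmem
  have hkey : β * (-m/(2*α)) = 2 * (β*(-m)/(4*α)) := by field_simp; ring
  have h2 : pekarE0 α β ψ < m := by
    rw [hval]
    have h3 : β * (-m/(2*α)) < β * ‖φ.toFun a‖^2 :=
      mul_lt_mul_of_pos_left ha hβ
    have h4 : 0 < β*(-m)/(4*α) := by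
      have : 0 < -m := by linarith
      positivity
    nlinarith
  exact lt_of_le_of_lt h1 h2
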